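/- (Remark 8.2) Let A be a real n×n matrix with nonnegative off-diagonal entries. Suppose there exist vectors x₀ > 0, y₀ > 0, z₀ > 0 such that the solution of x'(t) = Ax(t), x(0) = x₀ satisfies ⟨y₀, x(t)⟩ = χ₁e^{χ₂t} and ⟨z₀, x(t)⟩ = φ₁e^{φ₂t} on [0, τ] with χ₁, φ₁ > 0, τ > 0 and χ₂ ≠ φ₂. Then A is reducible (i.e., A is not irreducible). -/

import Mathlib

open Matrix Real

/-- A real matrix is irreducible when the directed graph with an edge `i → j`
whenever `i ≠ j` and `A i j > 0` is strongly connected; equivalently, every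
entry of some power of `1 + |A|` is positive. -/
def MatrixIrreducible {n : ℕ} (A : Matrix (Fin n) (Fin n) ℝ) : Prop :=
  ∀ i j : Fin n, ∃ m : ℕ,
    0 < (((1 : Matrix (Fin n) (Fin n) ℝ) + A.map (fun x => |x|)) ^ m) i j


lemma aux_pow_nonneg {n : ℕ} {B : Matrix (Fin n) (Fin n) ℝ}
    (hB : ∀ i j, 0 ≤ B i j) (k : ℕ) : ∀ i j, 0 ≤ (B ^ k) i j := by
  induction k with
  | zero => intro i j; rw [pow_zero, Matrix.one_apply]; positivity
  | succ k ih =>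
    intro i j
    rw [pow_succ, Matrix.mul_apply]
    exact Finset.sum_nonneg fun l _ => mul_nonneg (ih i l) (hB l j)

lemma aux_pow_le {n : ℕ} {P Q : Matrix (Fin n) (Fin n) ℝ}
    (hP : ∀ i j, 0 ≤ P i j) (hPQ : ∀ i j, P i j ≤ Q i j) (k : ℕ) :
    ∀ i j, (P ^ k) i j ≤ (Q ^ k) i j := by
  induction k with
  | zero => intro i j; simp
  | succ k ih =>
    intro i j
    rw [pow_succ, pow_succ, Matrix.mul_apply, Matrix.mul_apply]
    refine Finset.sum_le_sum fun l _ => mul_le_mul (ih i l) (hPQ l j) (hP l j) ?_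
    exact le_trans (aux_pow_nonneg hP k i l) (ih i l)

lemma aux_pow_diag {n : ℕ} {B : Matrix (Fin n) (Fin n) ℝ}
    (hB : ∀ i j, 0 ≤ B i j) (hd : ∀ i, 1 ≤ B i i) (k : ℕ) (i : Fin n) :
    1 ≤ (B ^ k) i i := by
  induction k with
  | zero => simp
  | succ k ih =>
    rw [pow_succ, Matrix.mul_apply]
    calc (1:ℝ) ≤ (B ^ k) i i * B i i := by nlinarith [hd i, aux_pow_nonneg hB k i i]
    _ ≤ ∑ l, (B ^ k) i l * B l i :=
        Finset.single_le_sum (fun l _ => mul_nonneg (aux_pow_nonneg hB k i l) (hB l i))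
          (Finset.mem_univ i)

lemma aux_pow_pos_mono {n : ℕ} {B : Matrix (Fin n) (Fin n) ℝ}
    (hB : ∀ i j, 0 ≤ B i j) (hd : ∀ i, 1 ≤ B i i) {m M : ℕ} (hmM : m ≤ M)
    {j i : Fin n} (h : 0 < (B ^ m) j i) : 0 < (B ^ M) j i := by
  have : B ^ M = B ^ m * B ^ (M - m) := by rw [← pow_add]; congr 1; omega
  rw [this, Matrix.mul_apply]
  refine lt_of_lt_of_le ?_ (Finset.single_le_sum
    (f := fun l => (B ^ m) j l * (B ^ (M - m)) l i)
    (fun l _ => mul_nonneg (aux_pow_nonneg hB m j l) (aux_pow_nonneg hB (M-m) l i))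
    (Finset.mem_univ i))
  have h2 := aux_pow_diag hB hd (M - m) i
  show 0 < (B ^ m) j i * (B ^ (M - m)) i i
  nlinarith


lemma aux_deriv {n : ℕ} (A : Matrix (Fin n) (Fin n) ℝ) (x : ℝ → (Fin n → ℝ))
    (hode : ∀ (t : ℝ) (i : Fin n), HasDerivAt (fun s => x s i) ((A.mulVec (x t)) i) t)
    (u : Fin n → ℝ) (t : ℝ) :
    HasDerivAt (fun s => ∑ i, u i * x s i) (∑ i, (Aᵀ *ᵥ u) i * x t i) t := by
  have h : HasDerivAt (fun s => ∑ i, u i * x s i) (∑ i, u i * (A *ᵥ x t) i) t :=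
    HasDerivAt.fun_sum fun i _ => (hode t i).const_mul (u i)
  convert h using 1
  simp only [Matrix.mulVec, dotProduct, Matrix.transpose_apply, Finset.sum_mul,
    Finset.mul_sum]
  rw [Finset.sum_comm]
  apply Finset.sum_congr rfl
  intro i _
  apply Finset.sum_congr rfl
  intro j _
  ring

lemma aux_step {n : ℕ} (A : Matrix (Fin n) (Fin n) ℝ) (x : ℝ → (Fin n → ℝ))
    (hode : ∀ (t : ℝ) (i : Fin n), HasDerivAt (fun s => x s i) ((A.mulVec (x t)) i) t)
    (τ : ℝ) (hτ : 0 < τ) (u : Fin n → ℝ) (K μ : ℝ)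
    (hu : ∀ t ∈ Set.Icc (0:ℝ) τ, (∑ i, u i * x t i) = K * exp (μ * t)) :
    ∀ t ∈ Set.Icc (0:ℝ) τ, (∑ i, (Aᵀ *ᵥ u) i * x t i) = (K * μ) * exp (μ * t) := by
  have hcont : ∀ v : Fin n → ℝ, Continuous (fun t => ∑ i, v i * x t i) := by
    intro v
    refine continuous_finset_sum _ fun i _ => Continuous.mul continuous_const ?_
    rw [continuous_iff_continuousAt]
    exact fun t => (hode t i).continuousAt
  have hIoo : ∀ t ∈ Set.Ioo (0:ℝ) τ, (∑ i, (Aᵀ *ᵥ u) i * x t i) = (K * μ) * exp (μ * t) := by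
    intro t ht
    have h1 : HasDerivAt (fun s => ∑ i, u i * x s i) (∑ i, (Aᵀ *ᵥ u) i * x t i) t :=
      aux_deriv A x hode u t
    have h2 : HasDerivAt (fun s => K * exp (μ * s)) (K * μ * exp (μ * t)) t := by
      have := ((hasDerivAt_id t).const_mul μ).exp.const_mul K
      simpa [mul_comm, mul_assoc, mul_left_comm] using this
    have heq : (fun s => ∑ i, u i * x s i) =ᶠ[nhds t] (fun s => K * exp (μ * s)) := by
      filter_upwards [Ioo_mem_nhds ht.1 ht.2] with s hs
      exact hu s ⟨hs.1.le, hs.2.le⟩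
    exact (h1.congr_of_eventuallyEq heq.symm |>.unique h2) ▸ rfl
  have hclos : Set.EqOn (fun t => ∑ i, (Aᵀ *ᵥ u) i * x t i)
      (fun t => (K * μ) * exp (μ * t)) (closure (Set.Ioo 0 τ)) :=
    Set.EqOn.closure (fun t ht => hIoo t ht) (hcont _) (by continuity)
  rw [closure_Ioo hτ.ne] at hclos
  exact fun t ht => hclos ht

lemma key (n : ℕ) (hn : 0 < n) (A : Matrix (Fin n) (Fin n) ℝ)
    (hoffdiag : ∀ i j : Fin n, i ≠ j → 0 ≤ A i j)
    (x : ℝ → (Fin n → ℝ)) (x₀ y₀ z₀ : Fin n → ℝ)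
    (hx₀ : (∀ i, 0 ≤ x₀ i) ∧ x₀ ≠ 0)
    (hy₀ : (∀ i, 0 ≤ y₀ i) ∧ y₀ ≠ 0)
    (hz₀ : (∀ i, 0 ≤ z₀ i) ∧ z₀ ≠ 0)
    (hx0 : x 0 = x₀)
    (hode : ∀ (t : ℝ) (i : Fin n),
      HasDerivAt (fun s => x s i) ((A.mulVec (x t)) i) t)
    (χ₁ χ₂ φ₁ φ₂ τ : ℝ) (hχ₁ : 0 < χ₁) (hφ₁ : 0 < φ₁) (hτ : 0 < τ)
    (hlt : χ₂ < φ₂)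
    (hout1 : ∀ t ∈ Set.Icc (0 : ℝ) τ,
      (∑ i, y₀ i * x t i) = χ₁ * Real.exp (χ₂ * t))
    (hout2 : ∀ t ∈ Set.Icc (0 : ℝ) τ,
      (∑ i, z₀ i * x t i) = φ₁ * Real.exp (φ₂ * t))
    (hirr : MatrixIrreducible A) : False := by
  set c : ℝ := 1 + |χ₂| + |φ₂| + ∑ i, 2 * |A i i| with hc
  have hsum : ∀ i : Fin n, 2 * |A i i| ≤ ∑ j, 2 * |A j j| :=
    fun i => Finset.single_le_sum (f := fun j => 2 * |A j j|) (fun j _ => by positivity) (Finset.mem_univ i)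
  have hcbig : ∀ i : Fin n, 1 + 2 * |A i i| ≤ c := by
    intro i
    have := hsum i
    have h1 : (0:ℝ) ≤ |χ₂| := abs_nonneg _
    have h2 : (0:ℝ) ≤ |φ₂| := abs_nonneg _
    simp only [hc]; linarith
  set B : Matrix (Fin n) (Fin n) ℝ := A + c • (1 : Matrix (Fin n) (Fin n) ℝ) with hB
  have hBapp : ∀ i j, B i j = A i j + if i = j then c else 0 := by
    intro i j
    simp [hB, Matrix.add_apply, Matrix.smul_apply, Matrix.one_apply, mul_ite]
  have hBnn : ∀ i j, 0 ≤ B i j := by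
    intro i j
    rw [hBapp]
    by_cases h : i = j
    · rw [if_pos h]
      subst h
      have := hcbig i
      have := abs_nonneg (A i i)
      have := neg_abs_le (A i i)
      linarith
    · rw [if_neg h]
      linarith [hoffdiag i j h]
  have hBdiag : ∀ i, 1 ≤ B i i := by
    intro i
    rw [hBapp, if_pos rfl]
    have := hcbig i
    have := neg_abs_le (A i i)
    have := abs_nonneg (A i i)
    linarith
  have hBge : ∀ i j, ((1 : Matrix (Fin n) (Fin n) ℝ) + A.map (fun x => |x|)) i j ≤ B i j := by
    intro i j
    rw [hBapp]
    simp only [Matrix.add_apply, Matrix.one_apply, Matrix.map_apply]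
    by_cases h : i = j
    · rw [if_pos h, if_pos h]
      subst h
      have := hcbig i
      have := neg_abs_le (A i i)
      linarith
    · rw [if_neg h, if_neg h]
      rw [abs_of_nonneg (hoffdiag i j h)]
      linarith
  have hOnn : ∀ i j, 0 ≤ ((1 : Matrix (Fin n) (Fin n) ℝ) + A.map (fun x => |x|)) i j := by
    intro i j
    simp only [Matrix.add_apply, Matrix.one_apply, Matrix.map_apply]
    by_cases h : i = j <;> simp [h, abs_nonneg] <;> positivity
  have hcχ : 0 < χ₂ + c := by
    have := neg_abs_le χ₂
    have : -|χ₂| ≤ χ₂ := this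
    have hs : (0:ℝ) ≤ ∑ j, 2 * |A j j| := Finset.sum_nonneg fun j _ => by positivity
    have h2 : (0:ℝ) ≤ |φ₂| := abs_nonneg _
    simp only [hc]; linarith
  have hcφ : 0 < φ₂ + c := by linarith
  -- the iterated outputs
  have iter : ∀ (w : Fin n → ℝ) (K μ : ℝ),
      (∀ t ∈ Set.Icc (0:ℝ) τ, (∑ i, w i * x t i) = K * exp (μ * t)) →
      ∀ k : ℕ, ∀ t ∈ Set.Icc (0:ℝ) τ,
        (∑ i, ((Bᵀ ^ k) *ᵥ w) i * x t i) = (K * (μ + c) ^ k) * exp (μ * t) := by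
    intro w K μ hw k
    induction k with
    | zero => simpa using hw
    | succ k ih =>
      intro t ht
      have hrw : (Bᵀ ^ (k+1)) *ᵥ w = Aᵀ *ᵥ ((Bᵀ ^ k) *ᵥ w) + c • ((Bᵀ ^ k) *ᵥ w) := by
        rw [pow_succ', Matrix.mulVec_mulVec]
        have : Bᵀ = Aᵀ + c • (1 : Matrix (Fin n) (Fin n) ℝ) := by
          simp [hB, Matrix.transpose_add, Matrix.transpose_smul]
        rw [← Matrix.mulVec_mulVec, this, Matrix.add_mulVec, Matrix.smul_mulVec,
          Matrix.one_mulVec, Matrix.mulVec_mulVec]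
      rw [hrw]
      have hstep := aux_step A x hode τ hτ ((Bᵀ ^ k) *ᵥ w) (K * (μ + c)^k) μ ih t ht
      have hlin : (∑ i, (Aᵀ *ᵥ ((Bᵀ ^ k) *ᵥ w) + c • ((Bᵀ ^ k) *ᵥ w)) i * x t i)
          = (∑ i, (Aᵀ *ᵥ ((Bᵀ ^ k) *ᵥ w)) i * x t i) + c * ∑ i, ((Bᵀ ^ k) *ᵥ w) i * x t i := by
        rw [Finset.mul_sum, ← Finset.sum_add_distrib]
        apply Finset.sum_congr rfl
        intro i _
        simp [Pi.add_apply, Pi.smul_apply, smul_eq_mul]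
        ring
      rw [hlin, hstep, ih t ht]
      ring
  -- evaluation at 0
  have hIcc0 : (0:ℝ) ∈ Set.Icc (0:ℝ) τ := ⟨le_refl _, hτ.le⟩
  have hy : ∀ k : ℕ, (∑ i, ((Bᵀ ^ k) *ᵥ y₀) i * x₀ i) = χ₁ * (χ₂ + c) ^ k := by
    intro k
    have := iter y₀ χ₁ χ₂ hout1 k 0 hIcc0
    simpa [hx0] using this
  have hz : ∀ k : ℕ, (∑ i, ((Bᵀ ^ k) *ᵥ z₀) i * x₀ i) = φ₁ * (φ₂ + c) ^ k := by
    intro k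
    have := iter z₀ φ₁ φ₂ hout2 k 0 hIcc0
    simpa [hx0] using this
  -- pick positive coordinates
  obtain ⟨j₁, hj₁⟩ : ∃ j, 0 < y₀ j := by
    obtain ⟨j, hj⟩ := Function.ne_iff.mp hy₀.2
    exact ⟨j, lt_of_le_of_ne (hy₀.1 j) (Ne.symm hj)⟩
  obtain ⟨j₂, hj₂⟩ : ∃ j, 0 < z₀ j := by
    obtain ⟨j, hj⟩ := Function.ne_iff.mp hz₀.2
    exact ⟨j, lt_of_le_of_ne (hz₀.1 j) (Ne.symm hj)⟩
  -- irreducibility gives a single power M with positive row j₁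
  choose m hm using fun i => hirr j₁ i
  set M : ℕ := Finset.univ.sup m with hM
  have hBM : ∀ i, 0 < (B ^ M) j₁ i := by
    intro i
    have h1 : 0 < (B ^ (m i)) j₁ i :=
      lt_of_lt_of_le (hm i) (aux_pow_le hOnn hBge (m i) j₁ i)
    exact aux_pow_pos_mono hBnn hBdiag (Finset.le_sup (Finset.mem_univ i)) h1
  -- β such that (Bᵀ^M y₀) ≥ β z₀ entrywise
  have hne' : (Finset.univ : Finset (Fin n)).Nonempty := ⟨j₁, Finset.mem_univ j₁⟩
  set γ : ℝ := Finset.univ.inf' hne' (fun i => (B ^ M) j₁ i) with hγdef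
  have hγpos : 0 < γ := by
    obtain ⟨i, _, hi⟩ := Finset.exists_mem_eq_inf' hne' (fun i => (B ^ M) j₁ i)
    rw [hγdef, hi]; exact hBM i
  have hγle : ∀ i, γ ≤ (B ^ M) j₁ i := fun i => Finset.inf'_le _ (Finset.mem_univ i)
  set Z : ℝ := Finset.univ.sup' hne' z₀ with hZdef
  have hZpos : 0 < Z := lt_of_lt_of_le hj₂ (Finset.le_sup' _ (Finset.mem_univ j₂))
  have hZle : ∀ i, z₀ i ≤ Z := fun i => Finset.le_sup' _ (Finset.mem_univ i)
  set β : ℝ := y₀ j₁ * γ / Z with hβdef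
  have hβpos : 0 < β := by positivity
  have hdom : ∀ i, β * z₀ i ≤ ((Bᵀ ^ M) *ᵥ y₀) i := by
    intro i
    have h1 : ((Bᵀ ^ M) *ᵥ y₀) i = ∑ j, (B ^ M) j i * y₀ j := by
      simp [Matrix.mulVec, dotProduct, ← Matrix.transpose_pow, Matrix.transpose_apply]
    rw [h1]
    have h2 : (B ^ M) j₁ i * y₀ j₁ ≤ ∑ j, (B ^ M) j i * y₀ j :=
      Finset.single_le_sum (fun j _ => mul_nonneg (aux_pow_nonneg hBnn M j i) (hy₀.1 j))
        (Finset.mem_univ j₁)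
    have h3 : β * z₀ i ≤ y₀ j₁ * γ := by
      rw [hβdef, div_mul_eq_mul_div, div_le_iff₀ hZpos]
      nlinarith [mul_nonneg (mul_nonneg hj₁.le hγpos.le) (sub_nonneg.mpr (hZle i))]
    have h4 : y₀ j₁ * γ ≤ (B ^ M) j₁ i * y₀ j₁ := by
      have := hγle i
      nlinarith
    linarith
  -- monotonicity of the pairing
  have hmono : ∀ (k : ℕ) (u v : Fin n → ℝ), (∀ i, u i ≤ v i) →
      (∑ i, ((Bᵀ ^ k) *ᵥ u) i * x₀ i) ≤ (∑ i, ((Bᵀ ^ k) *ᵥ v) i * x₀ i) := by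
    intro k u v huv
    refine Finset.sum_le_sum fun i _ => mul_le_mul_of_nonneg_right ?_ (hx₀.1 i)
    simp only [Matrix.mulVec, dotProduct, ← Matrix.transpose_pow,
      Matrix.transpose_apply]
    exact Finset.sum_le_sum fun j _ =>
      mul_le_mul_of_nonneg_left (huv j) (aux_pow_nonneg hBnn k j i)
  -- the main inequality
  have hineq : ∀ k : ℕ, β * (φ₁ * (φ₂ + c) ^ k) ≤ χ₁ * (χ₂ + c) ^ (k + M) := by
    intro k
    have h1 : (∑ i, ((Bᵀ ^ k) *ᵥ (β • z₀)) i * x₀ i)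
        ≤ (∑ i, ((Bᵀ ^ k) *ᵥ ((Bᵀ ^ M) *ᵥ y₀)) i * x₀ i) :=
      hmono k _ _ (fun i => by simpa using hdom i)
    have h2 : (∑ i, ((Bᵀ ^ k) *ᵥ (β • z₀)) i * x₀ i) = β * (φ₁ * (φ₂ + c) ^ k) := by
      rw [← hz k, Finset.mul_sum]
      apply Finset.sum_congr rfl
      intro i _
      rw [Matrix.mulVec_smul]
      simp [smul_eq_mul]
      ring
    have h3 : (∑ i, ((Bᵀ ^ k) *ᵥ ((Bᵀ ^ M) *ᵥ y₀)) i * x₀ i) = χ₁ * (χ₂ + c) ^ (k + M) := by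
      rw [← hy (k + M)]
      congr 1
      rw [Matrix.mulVec_mulVec, ← pow_add]
    rw [h2, h3] at h1
    exact h1
  -- contradiction from growth
  set r : ℝ := (φ₂ + c) / (χ₂ + c) with hr
  have hr1 : 1 < r := (one_lt_div hcχ).mpr (by linarith)
  obtain ⟨k, hk⟩ := ((tendsto_pow_atTop_atTop_of_one_lt hr1).eventually_gt_atTop
    ((χ₁ * (χ₂ + c) ^ M) / (β * φ₁))).exists
  have hkk : (χ₁ * (χ₂ + c) ^ M) / (β * φ₁) < (φ₂ + c) ^ k / (χ₂ + c) ^ k := by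
    rw [← div_pow]; exact hk
  have hak : (0:ℝ) < (χ₂ + c) ^ k := pow_pos hcχ k
  have hβφ : (0:ℝ) < β * φ₁ := by positivity
  have := hineq k
  rw [pow_add] at this
  rw [div_lt_div_iff₀ hβφ hak] at hkk
  nlinarith

/-- (Remark 8.2.) Let `A` be a real matrix with nonnegative off-diagonal
entries. If the solution of `x' = A x`, `x 0 = x₀ > 0` produces two exponential
outputs `⟨y₀, x t⟩ = χ₁ e^{χ₂ t}` and `⟨z₀, x t⟩ = φ₁ e^{φ₂ t}` on `[0, τ]`
with `y₀, z₀ > 0`, `χ₁, φ₁ > 0`, `τ > 0` and `χ₂ ≠ φ₂`, then `A` is reducible. -/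
theorem stmt_14 (n : ℕ) (hn : 0 < n) (A : Matrix (Fin n) (Fin n) ℝ)
    (hoffdiag : ∀ i j : Fin n, i ≠ j → 0 ≤ A i j)
    (x : ℝ → (Fin n → ℝ)) (x₀ y₀ z₀ : Fin n → ℝ)
    (hx₀ : (∀ i, 0 ≤ x₀ i) ∧ x₀ ≠ 0)
    (hy₀ : (∀ i, 0 ≤ y₀ i) ∧ y₀ ≠ 0)
    (hz₀ : (∀ i, 0 ≤ z₀ i) ∧ z₀ ≠ 0)
    (hx0 : x 0 = x₀)
    (hode : ∀ (t : ℝ) (i : Fin n),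
      HasDerivAt (fun s => x s i) ((A.mulVec (x t)) i) t)
    (χ₁ χ₂ φ₁ φ₂ τ : ℝ) (hχ₁ : 0 < χ₁) (hφ₁ : 0 < φ₁) (hτ : 0 < τ)
    (hne : χ₂ ≠ φ₂)
    (hout1 : ∀ t ∈ Set.Icc (0 : ℝ) τ,
      (∑ i, y₀ i * x t i) = χ₁ * Real.exp (χ₂ * t))
    (hout2 : ∀ t ∈ Set.Icc (0 : ℝ) τ,
      (∑ i, z₀ i * x t i) = φ₁ * Real.exp (φ₂ * t)) :
    ¬ MatrixIrreducible A := by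
  intro hirr
  rcases lt_or_gt_of_ne hne with h | h
  · exact key n hn A hoffdiag x x₀ y₀ z₀ hx₀ hy₀ hz₀ hx0 hode χ₁ χ₂ φ₁ φ₂ τ hχ₁ hφ₁ hτ h hout1 hout2 hirr
  · exact key n hn A hoffdiag x x₀ z₀ y₀ hx₀ hz₀ hy₀ hx0 hode φ₁ φ₂ χ₁ χ₂ τ hφ₁ hχ₁ hτ h hout2 hout1 hirr
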